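/- Let a, b, c be real numbers with a ≤ b ≤ c and a + b + c = 0. Then a³ + b³ + c³ = −(1/√6)·(a² + b² + c²)^{3/2} if and only if b = c = −a/2. -/

import Mathlib

theorem stmt_1 (a b c : ℝ) (hab : a ≤ b) (hbc : b ≤ c) (hsum : a + b + c = 0) :
    a ^ 3 + b ^ 3 + c ^ 3 = -(1 / Real.sqrt 6) * (a ^ 2 + b ^ 2 + c ^ 2) ^ ((3 : ℝ) / 2) ↔
    (b = -a / 2 ∧ c = -a / 2) := by
  have h6 : Real.sqrt 6 ^ 2 = 6 := Real.sq_sqrt (by norm_num)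
  have h6pos : (0:ℝ) < Real.sqrt 6 := Real.sqrt_pos.mpr (by norm_num)
  have hc : c = -a - b := by linarith
  subst hc
  constructor
  · intro h
    have hS : (0:ℝ) ≤ a ^ 2 + b ^ 2 + (-a - b) ^ 2 := by positivity
    have hpow : ((a ^ 2 + b ^ 2 + (-a - b) ^ 2) ^ ((3:ℝ)/2)) ^ 2
        = (a ^ 2 + b ^ 2 + (-a - b) ^ 2) ^ 3 := by
      rw [← Real.rpow_natCast ((a ^ 2 + b ^ 2 + (-a - b) ^ 2) ^ ((3:ℝ)/2)) 2,
        ← Real.rpow_mul hS]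
      norm_num
    have hpownn : (0:ℝ) ≤ (a ^ 2 + b ^ 2 + (-a - b) ^ 2) ^ ((3:ℝ)/2) :=
      Real.rpow_nonneg hS _
    have h2 : (a ^ 3 + b ^ 3 + (-a - b) ^ 3) ^ 2
        = (1/6) * (a ^ 2 + b ^ 2 + (-a - b) ^ 2) ^ 3 := by
      rw [h, mul_pow, hpow,
        show (-(1 / Real.sqrt 6)) ^ 2 = 1 / Real.sqrt 6 ^ 2 from by ring, h6]
    have key : (a - b) ^ 2 * (a + 2*b) ^ 2 * (2*a + b) ^ 2 = 0 := by
      linear_combination (-3) * h2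
    have hle : a ^ 3 + b ^ 3 + (-a - b) ^ 3 ≤ 0 := by
      rw [h]
      have h0 : (0:ℝ) ≤ 1 / Real.sqrt 6 := by positivity
      nlinarith
    rcases mul_eq_zero.mp key with h' | h3
    · rcases mul_eq_zero.mp h' with h1 | h2'
      · -- a = b
        have hab' : a = b := by
          have := pow_eq_zero_iff (n := 2) (by norm_num) |>.mp h1
          linarith
        subst hab'
        have ha3 : (0:ℝ) ≤ a ^ 3 := by nlinarith
        have ha : (0:ℝ) ≤ a := (Odd.pow_nonneg_iff (by decide)).mp ha3
        have ha0 : a = 0 := by linarith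
        constructor <;> linarith
      · -- a + 2b = 0
        have hb : a + 2*b = 0 := by
          have := pow_eq_zero_iff (n := 2) (by norm_num) |>.mp h2'
          linarith
        constructor <;> linarith
    · -- 2a + b = 0
      have hb : 2*a + b = 0 := by
        have := pow_eq_zero_iff (n := 2) (by norm_num) |>.mp h3
        linarith
      have ha0 : a = 0 := by linarith
      constructor <;> linarith
  · rintro ⟨hb, hc⟩
    subst hb
    have ha0 : a ≤ 0 := by linarith
    have hSeq : a ^ 2 + (-a/2) ^ 2 + (-a - (-a/2)) ^ 2 = (3/2) * a ^ 2 := by ring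
    rw [hSeq]
    have hnn : (0:ℝ) ≤ (3/2) * a ^ 2 := by positivity
    have h1 : ((3/2) * a ^ 2) ^ ((3:ℝ)/2) = Real.sqrt (((3/2) * a ^ 2) ^ 3) := by
      rw [Real.sqrt_eq_rpow, ← Real.rpow_natCast ((3/2) * a^2) 3, ← Real.rpow_mul hnn]
      norm_num
    have h2 : ((3/2) * a ^ 2) ^ 3 = (Real.sqrt 6 * (3/4) * (-a) ^ 3) ^ 2 := by
      linear_combination (-9/16 * a^6) * h6
    have h3 : Real.sqrt (((3/2) * a ^ 2) ^ 3) = Real.sqrt 6 * (3/4) * (-a) ^ 3 := by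
      rw [h2, Real.sqrt_sq (mul_nonneg (by positivity) (pow_nonneg (by linarith) 3))]
    rw [h1, h3]
    have h6ne : Real.sqrt 6 ≠ 0 := ne_of_gt h6pos
    field_simp
    nlinarith [h6]
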